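/- arXiv:2401.10152 — 6 statements merged into one kernel-verified Lean document; each statement's English description precedes it below -/
import Mathlib

section
/- For every integer a ≥ 2, one has 0 < 2a - (√(a²+1) + √(a²-1)) < 1/(2a³). -/
set_option maxHeartbeats 1000000 in
theorem two_a_minus_sqrts (a : ℕ) (ha : 2 ≤ a) :
    0 < 2 * (a : ℝ) - (Real.sqrt ((a : ℝ) ^ 2 + 1) + Real.sqrt ((a : ℝ) ^ 2 - 1)) ∧
    2 * (a : ℝ) - (Real.sqrt ((a : ℝ) ^ 2 + 1) + Real.sqrt ((a : ℝ) ^ 2 - 1))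
      < 1 / (2 * (a : ℝ) ^ 3) := by
  have ha' : (2 : ℝ) ≤ (a : ℝ) := by exact_mod_cast ha
  set x := Real.sqrt ((a : ℝ) ^ 2 + 1) with hxdef
  set y := Real.sqrt ((a : ℝ) ^ 2 - 1) with hydef
  have hx0 : 0 ≤ x := Real.sqrt_nonneg _
  have hy0 : 0 ≤ y := Real.sqrt_nonneg _
  have hx2 : x ^ 2 = (a : ℝ) ^ 2 + 1 := Real.sq_sqrt (by nlinarith)
  have hy2 : y ^ 2 = (a : ℝ) ^ 2 - 1 := Real.sq_sqrt (by nlinarith)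
  have hxy2 : (x * y) ^ 2 = (a : ℝ) ^ 4 - 1 := by
    rw [mul_pow, hx2, hy2]; ring
  have hxy0 : 0 ≤ x * y := mul_nonneg hx0 hy0
  have hxy : x * y < (a : ℝ) ^ 2 := by nlinarith
  have hx1 : (a : ℝ) < x := by nlinarith
  have hy1 : 0 < y := by nlinarith
  constructor
  · nlinarith [sq_nonneg (x + y)]
  · -- need x + y > 2a - 1/(2a^3)
    have ha0 : (0 : ℝ) < (a : ℝ) := by linarith
    have hxylb : (a : ℝ) ^ 2 - 1 / (a : ℝ) ^ 2 + 1 / (8 * (a : ℝ) ^ 6) < x * y := by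
      have h1 : (0 : ℝ) < (a : ℝ) ^ 2 - 1 / (a : ℝ) ^ 2 + 1 / (8 * (a : ℝ) ^ 6) := by
        have : (1:ℝ)/(a:ℝ)^2 ≤ 1 := by
          rw [div_le_one (by positivity)]; nlinarith
        have : (0:ℝ) < 1 / (8 * (a : ℝ) ^ 6) := by positivity
        nlinarith
      have h2 : ((a : ℝ) ^ 2 - 1 / (a : ℝ) ^ 2 + 1 / (8 * (a : ℝ) ^ 6)) ^ 2 < (x * y) ^ 2 := by
        rw [hxy2]
        have ha2 : (0:ℝ) < (a:ℝ)^2 := by positivity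
        have ha6 : (0:ℝ) < (a:ℝ)^6 := by positivity
        have key : ((a : ℝ) ^ 2 - 1 / (a : ℝ) ^ 2 + 1 / (8 * (a : ℝ) ^ 6)) ^ 2
            = (a:ℝ)^4 - 2 + 1/(a:ℝ)^4 + 1/(4*(a:ℝ)^4) - 1/(4*(a:ℝ)^8) + 1/(64*(a:ℝ)^12) := by
          field_simp
          ring
        rw [key]
        have h4 : (16:ℝ) ≤ (a:ℝ)^4 := by
          nlinarith [pow_le_pow_left₀ (by norm_num : (0:ℝ) ≤ 2) ha' 4]
        have e1 : (1:ℝ)/(a:ℝ)^4 ≤ 1/16 := by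
          rw [div_le_div_iff₀ (by positivity) (by norm_num)]; linarith
        have e2 : (1:ℝ)/(4*(a:ℝ)^4) ≤ 1/64 := by
          rw [div_le_div_iff₀ (by positivity) (by norm_num)]; linarith
        have e3 : (1:ℝ)/(64*(a:ℝ)^12) ≤ 1/64 := by
          rw [div_le_div_iff₀ (by positivity) (by norm_num)]
          nlinarith [pow_le_pow_left₀ (by norm_num : (0:ℝ) ≤ 2) ha' 12]
        have e4 : (0:ℝ) < 1/(4*(a:ℝ)^8) := by positivity
        linarith
      exact lt_of_pow_lt_pow_left₀ 2 hxy0 h2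
    have hsum : 2 * (a : ℝ) - 1 / (2 * (a : ℝ) ^ 3) < x + y := by
      have hc0 : 0 < 2 * (a : ℝ) - 1 / (2 * (a : ℝ) ^ 3) := by
        have : (1:ℝ) / (2 * (a : ℝ) ^ 3) ≤ 1 := by
          rw [div_le_one (by positivity)]; nlinarith
        linarith
      have hs2 : (2 * (a : ℝ) - 1 / (2 * (a : ℝ) ^ 3)) ^ 2 < (x + y) ^ 2 := by
        have exp : (2 * (a : ℝ) - 1 / (2 * (a : ℝ) ^ 3)) ^ 2
            = 4*(a:ℝ)^2 - 2/(a:ℝ)^2 + 1/(4*(a:ℝ)^6) := by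
          field_simp; ring
        have exps : (x + y) ^ 2 = 2*(a:ℝ)^2 + 2*(x*y) := by
          rw [add_sq, hx2, hy2]; ring
        rw [exp, exps]
        have : 2 * ((a : ℝ) ^ 2 - 1 / (a : ℝ) ^ 2 + 1 / (8 * (a : ℝ) ^ 6)) < 2 * (x*y) := by
          linarith
        have hrw : 2 * ((a : ℝ) ^ 2 - 1 / (a : ℝ) ^ 2 + 1 / (8 * (a : ℝ) ^ 6))
            = 2*(a:ℝ)^2 - 2/(a:ℝ)^2 + 1/(4*(a:ℝ)^6) := by
          field_simp; ring
        rw [hrw] at this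
        linarith
      exact lt_of_pow_lt_pow_left₀ 2 (by positivity) hs2
    linarith
end

section
/- For every integer a ≥ 2, √(a²+1) + √(a²-1) is not an integer and its distance to the nearest integer is at most 1/(2a³). -/
/-- Distance from a real number to the nearest integer. -/
noncomputable def distNearestInt (x : ℝ) : ℝ := |x - round x|

set_option maxHeartbeats 1600000 in
theorem sqrt_sum_close_to_int (a : ℕ) (ha : 2 ≤ a) :
    (∀ m : ℤ, Real.sqrt ((a : ℝ) ^ 2 + 1) + Real.sqrt ((a : ℝ) ^ 2 - 1) ≠ m) ∧
    distNearestInt (Real.sqrt ((a : ℝ) ^ 2 + 1) + Real.sqrt ((a : ℝ) ^ 2 - 1))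
      ≤ 1 / (2 * (a : ℝ) ^ 3) := by
  have ha' : (2:ℝ) ≤ (a:ℝ) := by exact_mod_cast ha
  set A : ℝ := (a:ℝ) with hA
  have hA0 : (0:ℝ) < A := by linarith
  have h1 : (0:ℝ) ≤ A^2 + 1 := by positivity
  have h2 : (0:ℝ) ≤ A^2 - 1 := by nlinarith
  set x := Real.sqrt (A^2 + 1) with hxdef
  set y := Real.sqrt (A^2 - 1) with hydef
  clear_value A x y
  have hx : x^2 = A^2 + 1 := by rw [hxdef]; exact Real.sq_sqrt h1
  have hy : y^2 = A^2 - 1 := by rw [hydef]; exact Real.sq_sqrt h2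
  have hx0 : 0 ≤ x := hxdef ▸ Real.sqrt_nonneg _
  have hy0 : 0 ≤ y := hydef ▸ Real.sqrt_nonneg _
  have hxysq : x^2 * y^2 = A^4 - 1 := by rw [hx, hy]; ring
  have hA2 : 4 ≤ A^2 := by nlinarith
  have hA4 : 16 ≤ A^4 := by nlinarith [sq_nonneg (A^2 - 4)]
  have hxy : x * y < A^2 := by nlinarith [mul_nonneg hx0 hy0]
  have hupper : x + y < 2 * A := by nlinarith [mul_nonneg hx0 hy0]
  have hs : A ≤ x + y := by nlinarith
  have hxyl : A^2/3 ≤ x * y := by nlinarith [mul_nonneg hx0 hy0]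
  have h4 : 4 * A^3 ≤ (A^2 + x*y) * (2*A + (x+y)) := by nlinarith
  have hprod : (2*A - (x+y)) * ((A^2 + x*y) * (2*A + (x+y))) = 2 := by
    linear_combination (-A^2 - x*y - 2*y^2) * hx + (-3*A^2 - 2 - x*y) * hy
  have hkey : 2*A - (x+y) ≤ 1 / (2*A^3) := by
    rw [le_div_iff₀ (by positivity : (0:ℝ) < 2*A^3)]
    nlinarith [hprod, h4, hupper]
  have hsmall : 1 / (2*A^3) ≤ 1/16 := by
    rw [div_le_div_iff₀ (by positivity) (by norm_num)]
    have h8 : (2:ℝ)^3 ≤ A^3 := pow_le_pow_left₀ (by norm_num) ha' 3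
    norm_num at h8 ⊢
    linarith
  constructor
  · intro m hm
    have h1m : (m:ℝ) < 2*A := by linarith [hupper]
    have h2m : 2*A - 1 < (m:ℝ) := by linarith
    have hAZ : (2*A : ℝ) = ((2*(a:ℤ) : ℤ) : ℝ) := by push_cast [hA]; ring
    rw [hAZ] at h1m h2m
    have h1m' : m < 2*(a:ℤ) := by exact_mod_cast h1m
    have h2m' : 2*(a:ℤ) - 1 < m := by exact_mod_cast (by push_cast; linarith : ((2*(a:ℤ) - 1 : ℤ):ℝ) < (m:ℝ))
    omega
  · have hround : round (x + y) = 2*(a:ℤ) := by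
      rw [round_eq]
      apply Int.floor_eq_iff.mpr
      constructor
      · push_cast [← hA]; linarith
      · push_cast [← hA]; linarith
    rw [distNearestInt, hround]
    have : (((2*(a:ℤ)):ℤ):ℝ) = 2*A := by push_cast [hA]; ring
    rw [this, abs_of_nonpos (by linarith)]
    linarith
end

section
/- For every integer k ≥ 2, the quantity √((k−1)²+2) + √((k+1)²+2) + √(4k²−8) − 4k tends to 0 as k → ∞, and in fact 0 < ‖√((k−1)²+2) + √((k+1)²+2) + √(4k²−8)‖ ≤ C/k⁵ for all sufficiently large k, for some absolute constant C. -/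
open Filter

set_option maxHeartbeats 2000000 in
private lemma key_bounds (x : ℝ) (hx : 4 ≤ x) :
    1 / x ^ 5 ≤ 4 * x - (Real.sqrt ((x - 1) ^ 2 + 2) + Real.sqrt ((x + 1) ^ 2 + 2)
      + Real.sqrt (4 * x ^ 2 - 8)) ∧
    4 * x - (Real.sqrt ((x - 1) ^ 2 + 2) + Real.sqrt ((x + 1) ^ 2 + 2)
      + Real.sqrt (4 * x ^ 2 - 8)) ≤ 7 / x ^ 5 := by
  have hx0 : (0:ℝ) < x := by linarith
  have hm : (0:ℝ) < x - 1 := by linarith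
  have hp : (0:ℝ) < x + 1 := by linarith
  have ht : (0:ℝ) ≤ x - 4 := by linarith
  have htm : (0:ℝ) ≤ x - 1 - 1 := by linarith
  have htp : (0:ℝ) ≤ x + 1 - 1 := by linarith
  have hnn1 : (0:ℝ) ≤ ((x-1)^6 + (x-1)^4 - (x-1)^2/2 + 1/2) / (x-1)^5 := by
    apply div_nonneg _ (by positivity)
    nlinarith [pow_nonneg htm 2, pow_nonneg htm 3, pow_nonneg htm 4, pow_nonneg htm 5,
      pow_nonneg htm 6]
  have hnn2 : (0:ℝ) ≤ ((x+1)^6 + (x+1)^4 - (x+1)^2/2 + 1/2) / (x+1)^5 := by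
    apply div_nonneg _ (by positivity)
    nlinarith [pow_nonneg htp 2, pow_nonneg htp 3, pow_nonneg htp 4, pow_nonneg htp 5,
      pow_nonneg htp 6]
  have hnn3 : (0:ℝ) ≤ (2*x^6 - 2*x^4 - x^2 - 1/2) / x^5 := by
    apply div_nonneg _ (by positivity)
    nlinarith [pow_nonneg ht 2, pow_nonneg ht 3, pow_nonneg ht 4, pow_nonneg ht 5,
      pow_nonneg ht 6]
  -- upper bounds on the square roots
  have ha_ub : Real.sqrt ((x - 1) ^ 2 + 2)
      ≤ ((x-1)^6 + (x-1)^4 - (x-1)^2/2 + 1/2) / (x-1)^5 := by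
    rw [Real.sqrt_le_left hnn1, div_pow, le_div_iff₀ (by positivity)]
    nlinarith [pow_nonneg htm 2, pow_nonneg htm 3, pow_nonneg htm 4, sq_nonneg (x-1),
      pow_pos hm 10, mul_pos (pow_pos hm 10) hm]
  have hb_ub : Real.sqrt ((x + 1) ^ 2 + 2)
      ≤ ((x+1)^6 + (x+1)^4 - (x+1)^2/2 + 1/2) / (x+1)^5 := by
    rw [Real.sqrt_le_left hnn2, div_pow, le_div_iff₀ (by positivity)]
    nlinarith [pow_nonneg htp 2, pow_nonneg htp 3, pow_nonneg htp 4, sq_nonneg (x+1),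
      pow_pos hp 10, mul_pos (pow_pos hp 10) hp]
  have hc_ub : Real.sqrt (4 * x ^ 2 - 8)
      ≤ (2*x^6 - 2*x^4 - x^2 - 1/2) / x^5 := by
    rw [Real.sqrt_le_left hnn3, div_pow, le_div_iff₀ (by positivity)]
    nlinarith [pow_nonneg ht 2, pow_nonneg ht 3, pow_nonneg ht 4, pow_nonneg ht 5,
      pow_nonneg ht 6, pow_pos hx0 10]
  -- lower bounds on the square roots
  have ha_lb : ((x-1)^4 + (x-1)^2 - 1/2) / (x-1)^3 ≤ Real.sqrt ((x - 1) ^ 2 + 2) := by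
    apply Real.le_sqrt_of_sq_le
    rw [div_pow, div_le_iff₀ (by positivity)]
    nlinarith [pow_nonneg htm 2, pow_pos hm 6]
  have hb_lb : ((x+1)^4 + (x+1)^2 - 1/2) / (x+1)^3 ≤ Real.sqrt ((x + 1) ^ 2 + 2) := by
    apply Real.le_sqrt_of_sq_le
    rw [div_pow, div_le_iff₀ (by positivity)]
    nlinarith [pow_nonneg htp 2, pow_pos hp 6]
  have hc_lb : (2*x^6 - 2*x^4 - x^2 - 2) / x^5 ≤ Real.sqrt (4 * x ^ 2 - 8) := by
    apply Real.le_sqrt_of_sq_le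
    rw [div_pow, div_le_iff₀ (by positivity)]
    nlinarith [pow_nonneg ht 2, pow_nonneg ht 3, pow_nonneg ht 4, pow_nonneg ht 5,
      pow_nonneg ht 6, pow_pos hx0 10]
  -- combine: upper bound on the sum
  have hsum_ub : ((x-1)^6 + (x-1)^4 - (x-1)^2/2 + 1/2) / (x-1)^5
      + ((x+1)^6 + (x+1)^4 - (x+1)^2/2 + 1/2) / (x+1)^5
      + (2*x^6 - 2*x^4 - x^2 - 1/2) / x^5 ≤ 4 * x - 1 / x ^ 5 := by
    rw [div_add_div _ _ (by positivity : ((x-1)^5:ℝ) ≠ 0) (by positivity : ((x+1)^5:ℝ) ≠ 0),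
      div_add_div _ _ (by positivity : ((x-1)^5 * (x+1)^5:ℝ) ≠ 0) (by positivity : (x^5:ℝ) ≠ 0),
      div_le_iff₀ (by positivity)]
    have h1 : (4 * x - 1 / x ^ 5) * ((x-1)^5 * (x+1)^5 * x^5)
        = 4*x * ((x-1)^5 * (x+1)^5 * x^5) - (x-1)^5 * (x+1)^5 := by
      field_simp
    rw [h1]
    nlinarith [pow_nonneg ht 2, pow_nonneg ht 3, pow_nonneg ht 4, pow_nonneg ht 5,
      pow_nonneg ht 6, pow_nonneg ht 7, pow_nonneg ht 8, pow_nonneg ht 9, pow_nonneg ht 10, ht]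
  -- combine: lower bound on the sum
  have hsum_lb : 4 * x - 7 / x ^ 5 ≤ ((x-1)^4 + (x-1)^2 - 1/2) / (x-1)^3
      + ((x+1)^4 + (x+1)^2 - 1/2) / (x+1)^3 + (2*x^6 - 2*x^4 - x^2 - 2) / x^5 := by
    rw [div_add_div _ _ (by positivity : ((x-1)^3:ℝ) ≠ 0) (by positivity : ((x+1)^3:ℝ) ≠ 0),
      div_add_div _ _ (by positivity : ((x-1)^3 * (x+1)^3:ℝ) ≠ 0) (by positivity : (x^5:ℝ) ≠ 0),
      le_div_iff₀ (by positivity)]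
    have h1 : (4 * x - 7 / x ^ 5) * ((x-1)^3 * (x+1)^3 * x^5)
        = 4*x * ((x-1)^3 * (x+1)^3 * x^5) - 7 * ((x-1)^3 * (x+1)^3) := by
      field_simp
    rw [h1]
    nlinarith [pow_nonneg ht 2, pow_nonneg ht 3, pow_nonneg ht 4, pow_nonneg ht 5,
      pow_nonneg ht 6, ht]
  constructor <;> linarith

theorem marshall_family :
    Tendsto (fun k : ℕ =>
      Real.sqrt (((k : ℝ) - 1) ^ 2 + 2) + Real.sqrt (((k : ℝ) + 1) ^ 2 + 2)
        + Real.sqrt (4 * (k : ℝ) ^ 2 - 8) - 4 * (k : ℝ)) atTop (nhds 0) ∧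
    ∃ C : ℝ, 0 < C ∧ ∀ᶠ k : ℕ in atTop,
      0 < distNearestInt (Real.sqrt (((k : ℝ) - 1) ^ 2 + 2) + Real.sqrt (((k : ℝ) + 1) ^ 2 + 2)
            + Real.sqrt (4 * (k : ℝ) ^ 2 - 8)) ∧
      distNearestInt (Real.sqrt (((k : ℝ) - 1) ^ 2 + 2) + Real.sqrt (((k : ℝ) + 1) ^ 2 + 2)
            + Real.sqrt (4 * (k : ℝ) ^ 2 - 8)) ≤ C / (k : ℝ) ^ 5 := by
  have hbound : ∀ k : ℕ, 4 ≤ k →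
      -(7 / (k:ℝ)^5) ≤ Real.sqrt (((k : ℝ) - 1) ^ 2 + 2) + Real.sqrt (((k : ℝ) + 1) ^ 2 + 2)
        + Real.sqrt (4 * (k : ℝ) ^ 2 - 8) - 4 * (k : ℝ) ∧
      Real.sqrt (((k : ℝ) - 1) ^ 2 + 2) + Real.sqrt (((k : ℝ) + 1) ^ 2 + 2)
        + Real.sqrt (4 * (k : ℝ) ^ 2 - 8) - 4 * (k : ℝ) ≤ -(1 / (k:ℝ)^5) := by
    intro k hk
    have hx : (4:ℝ) ≤ (k:ℝ) := by exact_mod_cast hk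
    obtain ⟨h1, h2⟩ := key_bounds (k:ℝ) hx
    constructor <;> linarith
  have hpow : Tendsto (fun k : ℕ => ((k:ℝ))^5) atTop atTop :=
    (tendsto_pow_atTop (by norm_num : 5 ≠ 0)).comp tendsto_natCast_atTop_atTop
  have hub : Tendsto (fun k : ℕ => -(1 / (k:ℝ)^5)) atTop (nhds 0) := by
    rw [show (0:ℝ) = -0 by norm_num]
    exact (Tendsto.div_atTop tendsto_const_nhds hpow).neg
  have hlb : Tendsto (fun k : ℕ => -(7 / (k:ℝ)^5)) atTop (nhds 0) := by
    rw [show (0:ℝ) = -0 by norm_num]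
    exact (Tendsto.div_atTop tendsto_const_nhds hpow).neg
  constructor
  · apply tendsto_of_tendsto_of_tendsto_of_le_of_le' hlb hub
    · filter_upwards [eventually_ge_atTop 4] with k hk using (hbound k hk).1
    · filter_upwards [eventually_ge_atTop 4] with k hk using (hbound k hk).2
  · refine ⟨7, by norm_num, ?_⟩
    filter_upwards [eventually_ge_atTop 4] with k hk
    obtain ⟨h1, h2⟩ := hbound k hk
    have hx : (4:ℝ) ≤ (k:ℝ) := by exact_mod_cast hk
    have hx5 : (1024:ℝ) ≤ (k:ℝ)^5 := by
      calc (1024:ℝ) = 4^5 := by norm_num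
      _ ≤ (k:ℝ)^5 := pow_le_pow_left₀ (by norm_num) hx 5
    have hx5pos : (0:ℝ) < (k:ℝ)^5 := by linarith
    have hinv : (0:ℝ) < 1 / (k:ℝ)^5 := by positivity
    have hinv7 : 7 / (k:ℝ)^5 < 1/2 := by rw [div_lt_iff₀ hx5pos]; linarith
    set S : ℝ := Real.sqrt (((k : ℝ) - 1) ^ 2 + 2) + Real.sqrt (((k : ℝ) + 1) ^ 2 + 2)
        + Real.sqrt (4 * (k : ℝ) ^ 2 - 8) with hS
    have hround : round S = 4 * (k:ℤ) := by
      rw [round_eq, Int.floor_eq_iff]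
      push_cast
      constructor <;> linarith
    have hdist : distNearestInt S = 4 * (k:ℝ) - S := by
      simp only [distNearestInt, hround]
      push_cast
      rw [abs_of_neg (by linarith : S - 4 * (k:ℝ) < 0)]
      ring
    constructor
    · rw [hdist]; linarith
    · rw [hdist]; linarith
end

section
/- For every nonnegative integer m ≥ 2 and every positive integer n, |∑_{i=0}^{m} C(m,i)·(−1)^i·√(n+i)| ≤ (2m−3)!! / (2^m · n^(m−1/2)). -/
open Finset fwdDiff

noncomputable def Dd (m : ℕ) (a : ℝ) : ℝ → ℝ := (fwdDiff (1:ℝ))^[m] (fun y => y ^ (-a))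

lemma Dd_sum (m : ℕ) (a x : ℝ) :
    Dd m a x = ∑ k ∈ range (m+1), ((-1:ℝ))^(m-k) * (m.choose k) * (x + k) ^ (-a) := by
  rw [Dd, fwdDiff_iter_eq_sum_shift]
  refine Finset.sum_congr rfl fun k _ => ?_
  simp [zsmul_eq_mul, mul_assoc]

lemma Dd_hasDerivAt (m : ℕ) (a : ℝ) {x : ℝ} (hx : 0 < x) :
    HasDerivAt (Dd m a) (-a * Dd m (a+1) x) x := by
  have hfun : Dd m a = fun y => ∑ k ∈ range (m+1),
      ((-1:ℝ))^(m-k) * (m.choose k) * (y + k) ^ (-a) := funext fun y => Dd_sum m a y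
  rw [hfun]
  have key : HasDerivAt (fun y => ∑ k ∈ range (m+1),
      ((-1:ℝ))^(m-k) * (m.choose k) * (y + k) ^ (-a))
      (∑ k ∈ range (m+1), ((-1:ℝ))^(m-k) * (m.choose k) * (-a * (x + k) ^ (-a-1))) x := by
    apply HasDerivAt.fun_sum
    intro k _
    have hxk : (0:ℝ) < x + k := by positivity
    have h1 : HasDerivAt (fun y : ℝ => (y + k) ^ (-a)) (-a * (x + k) ^ (-a-1)) x := by
      have := (Real.hasDerivAt_rpow_const (x := x + k) (p := -a) (Or.inl hxk.ne')).comp x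
        ((hasDerivAt_id x).add_const (k:ℝ))
      simpa [Function.comp_def] using this
    exact h1.const_mul _
  convert key using 1
  rw [Dd_sum, Finset.mul_sum]
  refine Finset.sum_congr rfl fun k _ => ?_
  rw [show -(a+1) = -a-1 by ring]
  ring

lemma Dd_bound (m : ℕ) : ∀ a x : ℝ, 0 < a → 0 < x →
    0 ≤ (-1:ℝ)^m * Dd m a x ∧
      (-1:ℝ)^m * Dd m a x ≤ (∏ j ∈ range m, (a + j)) * x ^ (-(a + m)) := by
  induction m with
  | zero =>
    intro a x ha hx
    simp only [Dd, Function.iterate_zero, id_eq, pow_zero, one_mul, range_zero, prod_empty,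
      Nat.cast_zero, add_zero]
    exact ⟨Real.rpow_nonneg hx.le _, le_refl _⟩
  | succ m ih =>
    intro a x ha hx
    have hstep : Dd (m+1) a x = Dd m a (x+1) - Dd m a x := by
      rw [Dd, Function.iterate_succ_apply']; rfl
    obtain ⟨c, hc, hceq⟩ := exists_hasDerivAt_eq_slope (Dd m a) (fun y => -a * Dd m (a+1) y)
      (show x < x + 1 by linarith)
      (fun y hy => (Dd_hasDerivAt m a (lt_of_lt_of_le hx hy.1)).continuousAt.continuousWithinAt)
      (fun y hy => Dd_hasDerivAt m a (lt_trans hx hy.1))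
    have hxc : 0 < c := lt_trans hx hc.1
    have hDeq : Dd (m+1) a x = -a * Dd m (a+1) c := by
      rw [hstep, hceq]; norm_num
    have ihc := ih (a+1) c (by linarith) hxc
    have hsign : (-1:ℝ)^(m+1) * Dd (m+1) a x = a * ((-1:ℝ)^m * Dd m (a+1) c) := by
      rw [hDeq, pow_succ]; ring
    constructor
    · rw [hsign]; exact mul_nonneg ha.le ihc.1
    · rw [hsign]
      have hrp : c ^ (-(a + 1 + (m:ℝ))) ≤ x ^ (-(a + 1 + (m:ℝ))) :=
        Real.rpow_le_rpow_of_nonpos hx hc.1.le (neg_nonpos.mpr (by positivity))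
      have h2 : (-1:ℝ)^m * Dd m (a+1) c ≤ (∏ j ∈ range m, (a + 1 + j)) * x ^ (-(a + 1 + m)) :=
        le_trans ihc.2 (mul_le_mul_of_nonneg_left hrp
          (Finset.prod_nonneg fun j _ => by positivity))
      calc a * ((-1:ℝ)^m * Dd m (a+1) c)
          ≤ a * ((∏ j ∈ range m, (a + 1 + j)) * x ^ (-(a + 1 + m))) :=
            mul_le_mul_of_nonneg_left h2 ha.le
        _ = (∏ j ∈ range (m+1), (a + j)) * x ^ (-(a + (m+1:ℕ))) := by
            rw [Finset.prod_range_succ',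
              show -(a + ((m+1:ℕ):ℝ)) = -(a+1+(m:ℝ)) by push_cast; ring,
              Finset.prod_congr rfl (fun j _ => show a + ((j+1:ℕ):ℝ) = a+1+(j:ℝ) by
                push_cast; ring)]
            push_cast; ring


lemma prod_half (k : ℕ) :
    ∏ j ∈ range k, ((1:ℝ)/2 + j) = (Nat.doubleFactorial (2*k-1) : ℝ) / 2^k := by
  induction k with
  | zero => simp
  | succ k ih =>
    have hd : (Nat.doubleFactorial (2*(k+1)-1) : ℝ) = (2*k+1) * Nat.doubleFactorial (2*k-1) := by
      rcases Nat.eq_zero_or_pos k with rfl | hk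
      · simp [Nat.doubleFactorial]
      · have h1 : 2*(k+1)-1 = (2*k-1)+2 := by omega
        have h2 : (2*k-1)+2 = 2*k+1 := by omega
        rw [h1, Nat.doubleFactorial_add_two, h2]
        push_cast
        ring
    rw [Finset.prod_range_succ, ih, hd]
    field_simp
    ring

lemma sqrt_sum_eq (m : ℕ) (x : ℝ) :
    ∑ i ∈ range (m+1), (m.choose i : ℝ) * (-1)^i * Real.sqrt (x + i)
      = (-1:ℝ)^m * (fwdDiff (1:ℝ))^[m] Real.sqrt x := by
  rw [fwdDiff_iter_eq_sum_shift, Finset.mul_sum]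
  refine Finset.sum_congr rfl fun k hk => ?_
  have hk' : k ≤ m := Nat.lt_succ_iff.mp (Finset.mem_range.mp hk)
  have hpow : ((-1:ℝ))^(m-k) * (-1)^k = (-1)^m := by
    rw [← pow_add, Nat.sub_add_cancel hk']
  have hsq : ((-1:ℝ))^((m-k)*2) = 1 := by
    rw [mul_comm, pow_mul]; norm_num
  simp only [zsmul_eq_mul, nsmul_eq_mul, mul_one]
  push_cast
  rw [← hpow]
  linear_combination (-((m.choose k : ℝ) * (-1:ℝ)^k * Real.sqrt (x + k))) * hsq

lemma sqrt_fwdDiff_hasDerivAt (m : ℕ) {x : ℝ} (hx : 0 < x) :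
    HasDerivAt ((fwdDiff (1:ℝ))^[m] Real.sqrt) ((1/2) * Dd m (1/2) x) x := by
  have hfun : (fwdDiff (1:ℝ))^[m] Real.sqrt = fun y => ∑ k ∈ range (m+1),
      ((-1:ℝ))^(m-k) * (m.choose k) * Real.sqrt (y + k) := by
    funext y
    rw [fwdDiff_iter_eq_sum_shift]
    refine Finset.sum_congr rfl fun k _ => ?_
    simp [zsmul_eq_mul, mul_assoc]
  rw [hfun]
  have key : HasDerivAt (fun y => ∑ k ∈ range (m+1),
      ((-1:ℝ))^(m-k) * (m.choose k) * Real.sqrt (y + k))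
      (∑ k ∈ range (m+1), ((-1:ℝ))^(m-k) * (m.choose k) * ((1/2) * (x + k) ^ (-(1/2:ℝ)))) x := by
    apply HasDerivAt.fun_sum
    intro k _
    have hxk : (0:ℝ) < x + k := by positivity
    have h1 : HasDerivAt (fun y : ℝ => Real.sqrt (y + k)) (1 / (2 * Real.sqrt (x + k))) x := by
      have := (Real.hasDerivAt_sqrt hxk.ne').comp x ((hasDerivAt_id x).add_const (k:ℝ))
      simpa [Function.comp_def] using this
    have heq : 1 / (2 * Real.sqrt (x + k)) = (1/2) * (x + k) ^ (-(1/2:ℝ)) := by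
      rw [Real.sqrt_eq_rpow, Real.rpow_neg hxk.le]
      ring
    rw [heq] at h1
    exact h1.const_mul _
  convert key using 1
  rw [Dd_sum, Finset.mul_sum]
  exact Finset.sum_congr rfl fun k _ => by ring

theorem qian_wang_inequality (m n : ℕ) (hm : 2 ≤ m) (hn : 1 ≤ n) :
    |∑ i ∈ Finset.range (m + 1), (m.choose i : ℝ) * (-1) ^ i * Real.sqrt (n + i)|
      ≤ (Nat.doubleFactorial (2 * m - 3) : ℝ) / (2 ^ m * (n : ℝ) ^ ((m : ℝ) - 1 / 2)) := by
  obtain ⟨k, rfl⟩ : ∃ k, m = k + 1 := ⟨m - 1, by omega⟩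
  have hk1 : 1 ≤ k := by omega
  have hn0 : (0:ℝ) < n := by exact_mod_cast hn
  rw [sqrt_sum_eq, abs_mul, abs_pow, abs_neg, abs_one, one_pow, one_mul]
  have hstep : (fwdDiff (1:ℝ))^[k+1] Real.sqrt (n:ℝ)
      = (fwdDiff (1:ℝ))^[k] Real.sqrt ((n:ℝ)+1) - (fwdDiff (1:ℝ))^[k] Real.sqrt n := by
    rw [Function.iterate_succ_apply']; rfl
  obtain ⟨c, hc, hceq⟩ := exists_hasDerivAt_eq_slope ((fwdDiff (1:ℝ))^[k] Real.sqrt)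
    (fun y => (1/2) * Dd k (1/2) y) (show (n:ℝ) < n + 1 by linarith)
    (fun y hy => (sqrt_fwdDiff_hasDerivAt k
      (lt_of_lt_of_le hn0 hy.1)).continuousAt.continuousWithinAt)
    (fun y hy => sqrt_fwdDiff_hasDerivAt k (lt_trans hn0 hy.1))
  have hxc : (0:ℝ) < c := lt_trans hn0 hc.1
  have heq : (fwdDiff (1:ℝ))^[k+1] Real.sqrt (n:ℝ) = (1/2) * Dd k (1/2) c := by
    rw [hstep, hceq]; norm_num
  rw [heq, abs_mul]
  have hDb := Dd_bound k (1/2) c (by norm_num) hxc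
  have habs : |Dd k (1/2) c| = (-1:ℝ)^k * Dd k (1/2) c := by
    rcases Nat.even_or_odd k with hpar | hpar
    · rw [hpar.neg_one_pow] at hDb ⊢
      rw [one_mul] at hDb ⊢
      exact abs_of_nonneg hDb.1
    · rw [hpar.neg_one_pow] at hDb ⊢
      rw [neg_one_mul] at hDb ⊢
      exact abs_of_nonpos (by linarith [hDb.1])
  rw [habs, show |(1:ℝ)/2| = 1/2 by norm_num]
  have hrp : c ^ (-(1/2 + (k:ℝ))) ≤ (n:ℝ) ^ (-(1/2 + (k:ℝ))) :=
    Real.rpow_le_rpow_of_nonpos hn0 hc.1.le (neg_nonpos.mpr (by positivity))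
  have hchain : (-1:ℝ)^k * Dd k (1/2) c
      ≤ (∏ j ∈ range k, ((1:ℝ)/2 + j)) * (n:ℝ) ^ (-(1/2 + (k:ℝ))) :=
    le_trans hDb.2 (mul_le_mul_of_nonneg_left hrp
      (Finset.prod_nonneg fun j _ => by positivity))
  have hfinal : (1/2 : ℝ) * ((∏ j ∈ range k, ((1:ℝ)/2 + j)) * (n:ℝ) ^ (-(1/2 + (k:ℝ))))
      = (Nat.doubleFactorial (2 * (k+1) - 3) : ℝ)
        / (2 ^ (k+1) * (n : ℝ) ^ (((k+1:ℕ) : ℝ) - 1/2)) := by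
    rw [prod_half, show 2*(k+1)-3 = 2*k-1 by omega,
      show -(1/2 + (k:ℝ)) = -((((k+1:ℕ)):ℝ) - 1/2) by push_cast; ring,
      Real.rpow_neg hn0.le]
    have hne : (n:ℝ) ^ ((((k+1:ℕ)):ℝ) - 1/2) ≠ 0 := (Real.rpow_pos_of_pos hn0 _).ne'
    field_simp
    ring_nf
  calc (1/2 : ℝ) * ((-1:ℝ)^k * Dd k (1/2) c)
      ≤ (1/2 : ℝ) * ((∏ j ∈ range k, ((1:ℝ)/2 + j)) * (n:ℝ) ^ (-(1/2 + (k:ℝ)))) := by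
        linarith [hchain]
    _ = _ := hfinal
end

section
/- If a is a positive integer that is not a perfect square, then ‖√(4a)‖ ≥ 1/(2√(4a)+1), and consequently for 1 ≤ a, b ≤ n with 4ab not a perfect square, ‖√(4ab)‖ ≥ 1/(5n). -/
lemma not_sq_int {m : ℕ} (h : ¬ IsSquare m) (k : ℤ) : (m : ℤ) ≠ k ^ 2 := by
  intro he
  apply h
  have h1 : (m : ℤ) = (k.natAbs : ℤ) ^ 2 := by
    rw [he, ← sq_abs k, Int.abs_eq_natAbs]
  have h2 : m = k.natAbs ^ 2 := by exact_mod_cast h1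
  exact ⟨k.natAbs, by rw [h2]; ring⟩

lemma not_sq_four {a : ℕ} (h : ¬ IsSquare a) : ¬ IsSquare (4 * a) := by
  rintro ⟨j, hj⟩
  have h2 : 2 ∣ j := by
    have : 2 ∣ j * j := ⟨2 * a, by omega⟩
    exact (Nat.Prime.dvd_mul Nat.prime_two).mp this |>.elim id id
  obtain ⟨i, rfl⟩ := h2
  exact h ⟨i, by nlinarith⟩

lemma core {m : ℕ} (hm : 1 ≤ m) (h : ¬ IsSquare m) :
    1 / (2 * Real.sqrt m + 1) ≤ distNearestInt (Real.sqrt m) := by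
  set x := Real.sqrt m with hxdef
  have hx0 : 1 ≤ x := by
    rw [hxdef, show (1:ℝ) = Real.sqrt 1 by simp]
    exact Real.sqrt_le_sqrt (by exact_mod_cast hm)
  have hx2 : x ^ 2 = m := Real.sq_sqrt (by positivity)
  set r := round x with hrdef
  have habs := abs_sub_round x
  have hb := abs_le.mp habs
  have hxr : 0 < x + r := by linarith [hb.1, hb.2]
  have hne : (m : ℤ) ≠ r ^ 2 := not_sq_int h r
  have h1 : (1:ℝ) ≤ |(m:ℝ) - (r:ℝ)^2| := by
    have h0 : 1 ≤ |(m : ℤ) - r^2| := Int.one_le_abs (sub_ne_zero.mpr hne)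
    exact_mod_cast h0
  have hkey : |x - r| * (x + r) = |(m:ℝ) - (r:ℝ)^2| := by
    rw [← hx2, ← abs_of_pos hxr, ← abs_mul,
      show (x - r) * (x + r) = x^2 - (r:ℝ)^2 by ring]
  have h2 : 1 ≤ |x - (r:ℝ)| * (x + r) := by rw [hkey]; exact h1
  have hfin : 1 / (2 * x + 1) ≤ |x - (r:ℝ)| := by
    rw [div_le_iff₀ (by linarith)]
    nlinarith [abs_nonneg (x - (r:ℝ)), hb.1, hb.2]
  simpa [distNearestInt] using hfin

theorem sqrt_4a_bound :
    (∀ a : ℕ, 0 < a → ¬ IsSquare a →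
      1 / (2 * Real.sqrt (4 * a) + 1) ≤ distNearestInt (Real.sqrt (4 * a))) ∧
    (∀ n a b : ℕ, 1 ≤ a → a ≤ n → 1 ≤ b → b ≤ n → ¬ IsSquare (4 * a * b) →
      1 / (5 * n) ≤ distNearestInt (Real.sqrt (4 * a * b))) := by
  constructor
  · intro a ha hsq
    have := core (m := 4 * a) (by omega) (not_sq_four hsq)
    have hc : ((4 * a : ℕ) : ℝ) = 4 * (a : ℝ) := by push_cast; ring
    rwa [hc] at this
  · intro n a b ha han hb hbn hsq
    have hm : 1 ≤ 4 * a * b := Nat.mul_pos (Nat.mul_pos (by norm_num) ha) hb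
    have hcore := core (m := 4 * a * b) hm hsq
    have hc : ((4 * a * b : ℕ) : ℝ) = 4 * (a : ℝ) * b := by push_cast; ring
    rw [hc] at hcore
    refine le_trans ?_ hcore
    have hn1 : (1:ℝ) ≤ n := by exact_mod_cast le_trans ha han
    have hs : Real.sqrt (4 * (a:ℝ) * b) ≤ 2 * n := by
      rw [show (2 : ℝ) * n = Real.sqrt ((2*n)^2) by
        rw [Real.sqrt_sq (by positivity)]]
      apply Real.sqrt_le_sqrt
      have haR : (a : ℝ) ≤ n := by exact_mod_cast han
      have hbR : (b : ℝ) ≤ n := by exact_mod_cast hbn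
      have ha0 : (0:ℝ) ≤ a := by positivity
      have hb0 : (0:ℝ) ≤ b := by positivity
      nlinarith
    have hpos : 0 < 2 * Real.sqrt (4 * (a:ℝ) * b) + 1 := by
      positivity
    apply one_div_le_one_div_of_le hpos
    linarith
end

section
/- Let k ≥ 1 and let a₁, …, a_k be integers in {1,…,n} whose squarefree parts are pairwise distinct and all greater than 1 (so that 1, √a₁, …, √a_k are linearly independent over ℚ). Then √a₁ + ⋯ + √a_k is irrational, and ‖√a₁ + ⋯ + √a_k‖ ≥ c_k · n^(1/2 − 2^(k−1)) for a constant c_k > 0 depending only on k. -/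
open Finset Polynomial

noncomputable def sqA (S : Finset ℕ) : Subalgebra ℚ ℝ :=
  Algebra.adjoin ℚ ((fun p : ℕ => Real.sqrt p) '' ↑S)

lemma sqrt_nat_isIntegral (p : ℕ) : IsIntegral ℚ (Real.sqrt p) := by
  refine ⟨X ^ 2 - C (p : ℚ), monic_X_pow_sub_C _ (by norm_num), ?_⟩
  simp [Real.sq_sqrt (by positivity : (0:ℝ) ≤ (p:ℝ))]

lemma sqA_le_integralClosure (S : Finset ℕ) : sqA S ≤ integralClosure ℚ ℝ := by
  apply Algebra.adjoin_le
  rintro x ⟨p, -, rfl⟩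
  exact sqrt_nat_isIntegral p

lemma sqA_inv_mem {S : Finset ℕ} {x : ℝ} (hx : x ∈ sqA S) : x⁻¹ ∈ sqA S :=
  Subalgebra.inv_mem_of_algebraic (A := sqA S) (x := ⟨x, hx⟩)
    ((sqA_le_integralClosure S hx).isAlgebraic)

lemma sqrt_finset_prod {ι : Type*} (t : Finset ι) (f : ι → ℝ) (hf : ∀ i ∈ t, 0 ≤ f i) :
    Real.sqrt (∏ i ∈ t, f i) = ∏ i ∈ t, Real.sqrt (f i) := by
  induction t using Finset.cons_induction with
  | empty => simp
  | cons a t ha ih =>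
    rw [Finset.prod_cons, Finset.prod_cons,
      Real.sqrt_mul (hf a (Finset.mem_cons_self a t)),
      ih (fun i hi => hf i (Finset.mem_cons_of_mem hi))]

lemma sqrt_mem_sqA {S : Finset ℕ} {n : ℕ} (hn : Squarefree n)
    (hsub : n.primeFactors ⊆ S) : Real.sqrt n ∈ sqA S := by
  have h1 : (n : ℝ) = ∏ p ∈ n.primeFactors, (p : ℝ) := by
    rw [← Nat.cast_prod, Nat.prod_primeFactors_of_squarefree hn]
  rw [h1, sqrt_finset_prod _ _ (fun i _ => by positivity)]
  exact Subalgebra.prod_mem _ fun p hp => Algebra.subset_adjoin ⟨p, hsub hp, rfl⟩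

lemma sqA_insert_decomp {S : Finset ℕ} {q : ℕ} {x : ℝ}
    (hx : x ∈ sqA (insert q S)) :
    ∃ A B : ℝ, A ∈ sqA S ∧ B ∈ sqA S ∧ x = A + B * Real.sqrt q := by
  have hgen : ((fun p : ℕ => Real.sqrt p) '' ↑(insert q S))
      = insert (Real.sqrt q) ((fun p : ℕ => Real.sqrt p) '' ↑S) := by
    rw [Finset.coe_insert, Set.image_insert_eq]
  rw [sqA, hgen] at hx
  induction hx using Algebra.adjoin_induction with
  | mem x hx =>
    rcases hx with rfl | hx
    · exact ⟨0, 1, zero_mem _, one_mem _, by ring⟩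
    · exact ⟨x, 0, Algebra.subset_adjoin hx, zero_mem _, by ring⟩
  | algebraMap r => exact ⟨algebraMap ℚ ℝ r, 0, Subalgebra.algebraMap_mem _ r, zero_mem _, by ring⟩
  | add x y hx hy ihx ihy =>
    obtain ⟨A, B, hA, hB, rfl⟩ := ihx
    obtain ⟨C, D, hC, hD, rfl⟩ := ihy
    exact ⟨A + C, B + D, add_mem hA hC, add_mem hB hD, by ring⟩
  | mul x y hx hy ihx ihy =>
    obtain ⟨A, B, hA, hB, rfl⟩ := ihx
    obtain ⟨C, D, hC, hD, rfl⟩ := ihy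
    refine ⟨A * C + B * D * q, A * D + B * C, ?_, ?_, ?_⟩
    · exact add_mem (mul_mem hA hC) (mul_mem (mul_mem hB hD) (Subalgebra.natCast_mem _ q))
    · exact add_mem (mul_mem hA hD) (mul_mem hB hC)
    · have : Real.sqrt q * Real.sqrt q = (q : ℝ) :=
        Real.mul_self_sqrt (by positivity)
      linear_combination B * D * this

lemma sqrt_not_mem_sqA (S : Finset ℕ) (hS : ∀ p ∈ S, p.Prime) :
    ∀ n : ℕ, Squarefree n → ¬ n.primeFactors ⊆ S → Real.sqrt n ∉ sqA S := by
  induction S using Finset.induction_on with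
  | empty =>
    intro n hn hsub hmem
    obtain ⟨r, hr⟩ := Finset.not_subset.mp hsub
    have hnsq : ¬ IsSquare n := by
      rintro ⟨m, rfl⟩
      have hm : m = 1 := Nat.isUnit_iff.mp (hn m (dvd_refl _))
      subst hm
      simp at hr
    have hirr : Irrational (Real.sqrt n) := irrational_sqrt_natCast_iff.mpr hnsq
    rw [sqA, Finset.coe_empty, Set.image_empty, Algebra.adjoin_empty, Algebra.mem_bot] at hmem
    obtain ⟨r', hr'⟩ := hmem
    exact hirr ⟨r', by rw [← hr', eq_ratCast]⟩
  | @insert q S hq ih =>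
    have hqP : q.Prime := hS q (Finset.mem_insert_self q S)
    have hSP : ∀ p ∈ S, p.Prime := fun p hp => hS p (Finset.mem_insert_of_mem hp)
    have ihS := ih hSP
    intro n hn hsub hmem
    have hn0 : n ≠ 0 := hn.ne_zero
    obtain ⟨A, B, hA, hB, heq⟩ := sqA_insert_decomp hmem
    have hq0 : (0:ℝ) < Real.sqrt q := Real.sqrt_pos.mpr (by exact_mod_cast hqP.pos)
    have hq2 : Real.sqrt q * Real.sqrt q = (q:ℝ) := Real.mul_self_sqrt (by positivity)
    by_cases hB0 : B = 0
    · -- √n = A ∈ sqA S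
      refine ihS n hn (fun h => hsub (h.trans (Finset.subset_insert q S))) ?_
      rw [heq, hB0]; simpa using hA
    by_cases hA0 : A = 0
    · -- √n = B √q
      have heq' : Real.sqrt n = B * Real.sqrt q := by rw [heq, hA0]; ring
      by_cases hqn : q ∣ n
      · obtain ⟨m, hm⟩ := hqn
        have hmdvd : m ∣ n := ⟨q, by rw [hm]; ring⟩
        have hmsf : Squarefree m := hn.squarefree_of_dvd hmdvd
        have hsplit : Real.sqrt n = Real.sqrt q * Real.sqrt m := by
          rw [hm]; push_cast; exact Real.sqrt_mul (by positivity) _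
        have hBm : Real.sqrt m = B := by
          have : Real.sqrt q * Real.sqrt m = Real.sqrt q * B := by
            rw [← hsplit, heq']; ring
          exact mul_left_cancel₀ (ne_of_gt hq0) this
        refine ihS m hmsf ?_ (by rw [hBm]; exact hB)
        intro hms
        obtain ⟨r, hrn, hrS⟩ := Finset.not_subset.mp hsub
        have hrP : r.Prime := Nat.prime_of_mem_primeFactors hrn
        have hrdvdn : r ∣ n := Nat.dvd_of_mem_primeFactors hrn
        have hrq : r ≠ q := fun h => hrS (h ▸ Finset.mem_insert_self q S)
        have hrm : r ∣ m := by
          rcases (Nat.Prime.dvd_mul hrP).mp (hm ▸ hrdvdn) with h | h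
          · exact absurd ((Nat.prime_dvd_prime_iff_eq hrP hqP).mp h) hrq
          · exact h
        have hm0 : m ≠ 0 := fun h => hn0 (by rw [hm, h, mul_zero])
        exact hrS (Finset.mem_insert_of_mem (hms (Nat.mem_primeFactors.mpr ⟨hrP, hrm, hm0⟩)))
      · -- q ∤ n : √(nq) = B q ∈ sqA S
        have hcop : Nat.Coprime q n := (Nat.Prime.coprime_iff_not_dvd hqP).mpr hqn
        have hsf : Squarefree (n * q) := by
          rw [Nat.squarefree_mul hcop.symm]
          exact ⟨hn, hqP.squarefree⟩
        have hval : Real.sqrt (((n * q : ℕ) : ℝ)) = B * q := by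
          rw [show ((n * q : ℕ) : ℝ) = (n:ℝ) * q by push_cast; ring,
            Real.sqrt_mul (by positivity), heq', mul_assoc, hq2]
        refine ihS (n * q) hsf ?_ (by rw [hval]; exact mul_mem hB (Subalgebra.natCast_mem _ q))
        intro hms
        refine hq (hms (Nat.mem_primeFactors.mpr ⟨hqP, ⟨n, by ring⟩, ?_⟩))
        exact mul_ne_zero hn0 hqP.ne_zero
    · -- A ≠ 0, B ≠ 0 : √q ∈ sqA S
      have hn2 : Real.sqrt n * Real.sqrt n = (n:ℝ) := Real.mul_self_sqrt (by positivity)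
      have hD : (2 * A * B : ℝ) ≠ 0 := by
        exact mul_ne_zero (mul_ne_zero two_ne_zero hA0) hB0
      have hkey : Real.sqrt q = ((n:ℝ) - A^2 - B^2 * q) * (2 * A * B)⁻¹ := by
        rw [eq_mul_inv_iff_mul_eq₀ hD]
        linear_combination (-(Real.sqrt n + A + B * Real.sqrt q)) * heq + hn2 - B^2 * hq2
      have hmemq : Real.sqrt q ∈ sqA S := by
        rw [hkey]
        refine mul_mem ?_ (sqA_inv_mem ?_)
        · exact sub_mem (sub_mem (Subalgebra.natCast_mem _ n) (pow_mem hA 2))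
            (mul_mem (pow_mem hB 2) (Subalgebra.natCast_mem _ q))
        · exact mul_mem (mul_mem (Subalgebra.natCast_mem (sqA S) 2) hA) hB
      refine ihS q hqP.squarefree ?_ hmemq
      rw [Nat.Prime.primeFactors hqP]
      simpa using hq

lemma ratCast_mem_sqA (S : Finset ℕ) (x : ℚ) : ((x : ℝ)) ∈ sqA S := by
  rw [← eq_ratCast (algebraMap ℚ ℝ) x]
  exact Subalgebra.algebraMap_mem _ x

lemma div_facts {S : Finset ℕ} {q n : ℕ} (hqP : q.Prime) (hsf : Squarefree n)
    (hsub : n.primeFactors ⊆ insert q S) (hdvd : q ∣ n) (hn1 : 1 < n) :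
    q * (n / q) = n ∧ Squarefree (n / q) ∧ (n / q).primeFactors ⊆ S ∧ 1 ≤ n / q := by
  have hmul : q * (n / q) = n := Nat.mul_div_cancel' hdvd
  have hn0 : n ≠ 0 := by omega
  have hdvd' : n / q ∣ n := Dvd.intro_left q (by omega)
  have hsf' : Squarefree (n / q) := hsf.squarefree_of_dvd hdvd'
  have hne : n / q ≠ 0 := fun h => hn0 (by rw [← hmul, h, mul_zero])
  refine ⟨hmul, hsf', ?_, Nat.one_le_iff_ne_zero.mpr hne⟩
  intro p hp
  have hpP : p.Prime := Nat.prime_of_mem_primeFactors hp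
  have hpd : p ∣ n / q := Nat.dvd_of_mem_primeFactors hp
  have hpq : p ≠ q := by
    rintro rfl
    have : p * p ∣ n := by
      rw [← hmul]; exact mul_dvd_mul_left p hpd
    exact hpP.not_isUnit (hsf p this)
  have : p ∈ insert q S := hsub (Nat.mem_primeFactors.mpr ⟨hpP, hpd.trans hdvd', hn0⟩)
  rcases Finset.mem_insert.mp this with h | h
  · exact absurd h hpq
  · exact h

theorem sqrt_sum_ne_rat (S : Finset ℕ) : (∀ p ∈ S, p.Prime) →
    ∀ (F : Finset ℕ) (c : ℕ → ℚ),
      (∀ n ∈ F, Squarefree n ∧ 1 < n ∧ n.primeFactors ⊆ S) →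
      (∀ n ∈ F, c n ≠ 0) → F.Nonempty →
      ∀ r : ℚ, (∑ n ∈ F, (c n : ℝ) * Real.sqrt n) ≠ (r : ℝ) := by
  induction S using Finset.induction_on with
  | empty =>
    intro _ F c hF hc hFne r hsum
    obtain ⟨n, hn⟩ := hFne
    obtain ⟨hsf, hlt, hsub⟩ := hF n hn
    obtain ⟨p, hp, hpd⟩ := Nat.exists_prime_and_dvd (by omega : n ≠ 1)
    exact absurd (hsub (Nat.mem_primeFactors.mpr ⟨hp, hpd, by omega⟩)) (Finset.notMem_empty p)
  | @insert q S hq ih =>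
    intro hS
    have hqP : q.Prime := hS q (Finset.mem_insert_self q S)
    have hSP : ∀ p ∈ S, p.Prime := fun p hp => hS p (Finset.mem_insert_of_mem hp)
    have ihS := ih hSP
    intro F c hF hc hFne r hsum
    classical
    set F₂ := F.filter (fun n => q ∣ n) with hF₂def
    set F₁ := F.filter (fun n => ¬ q ∣ n) with hF₁def
    have hsplitF : ∑ n ∈ F₁, (c n : ℝ) * Real.sqrt n
        + ∑ n ∈ F₂, (c n : ℝ) * Real.sqrt n
        = ∑ n ∈ F, (c n : ℝ) * Real.sqrt n := by
      rw [hF₁def, hF₂def, Finset.sum_filter_not_add_sum_filter]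
    by_cases hF₂ne : F₂.Nonempty
    swap
    · -- F₂ empty
      have hF₂e : F₂ = ∅ := Finset.not_nonempty_iff_eq_empty.mp hF₂ne
      have hF₁F : F₁ = F := by
        rw [hF₁def, Finset.filter_eq_self]
        intro n hn hdvd
        exact (Finset.notMem_empty n) (hF₂e ▸ Finset.mem_filter.mpr ⟨hn, hdvd⟩)
      refine ihS F c ?_ hc hFne r hsum
      intro n hn
      obtain ⟨hsf, hlt, hsub⟩ := hF n hn
      refine ⟨hsf, hlt, fun p hp => ?_⟩
      rcases Finset.mem_insert.mp (hsub hp) with h | h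
      · exfalso
        have : n ∈ F₂ := Finset.mem_filter.mpr ⟨hn, h ▸ Nat.dvd_of_mem_primeFactors hp⟩
        exact (Finset.notMem_empty n) (hF₂e ▸ this)
      · exact h
    · -- F₂ nonempty
      have hfacts : ∀ n ∈ F₂, q * (n / q) = n ∧ Squarefree (n / q) ∧
          (n / q).primeFactors ⊆ S ∧ 1 ≤ n / q := by
        intro n hn
        obtain ⟨hnF, hdvd⟩ := Finset.mem_filter.mp hn
        obtain ⟨hsf, hlt, hsub⟩ := hF n hnF
        exact div_facts hqP hsf hsub hdvd hlt
      set B : ℝ := ∑ n ∈ F₂, (c n : ℝ) * Real.sqrt (n / q : ℕ) with hBdef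
      set A : ℝ := ∑ n ∈ F₁, (c n : ℝ) * Real.sqrt n with hAdef
      have hqpos : (0:ℝ) < Real.sqrt q := Real.sqrt_pos.mpr (by exact_mod_cast hqP.pos)
      have hsum2 : A + B * Real.sqrt q = (r : ℝ) := by
        rw [← hsum, ← hsplitF, hBdef, Finset.sum_mul]
        congr 1
        refine Finset.sum_congr rfl fun n hn => ?_
        have hmul := (hfacts n hn).1
        have : Real.sqrt n = Real.sqrt q * Real.sqrt (n / q : ℕ) := by
          rw [show ((n : ℕ) : ℝ) = (q : ℝ) * ((n / q : ℕ) : ℝ) by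
            rw [← Nat.cast_mul, hmul], Real.sqrt_mul (by positivity)]
        rw [this]; ring
      by_cases hB0 : B = 0
      · -- B = 0 : contradiction via ihS on the m's
        set G := F₂.image (fun n => n / q) with hGdef
        have hinj : Set.InjOn (fun n => n / q) F₂ := by
          intro x hx y hy hxy
          have hx1 := (hfacts x hx).1
          have hy1 := (hfacts y hy).1
          simp only at hxy
          rw [← hx1, ← hy1, hxy]
        have hGB : ∑ m ∈ G, ((c (q * m) : ℝ) * Real.sqrt m) = B := by
          rw [hGdef, Finset.sum_image (fun x hx y hy => hinj hx hy)]
          refine Finset.sum_congr rfl fun n hn => ?_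
          rw [(hfacts n hn).1]
        have hGmem : ∀ m ∈ G, ∃ n ∈ F₂, n / q = m := by
          intro m hm
          obtain ⟨n, hn, hnm⟩ := Finset.mem_image.mp hm
          exact ⟨n, hn, hnm⟩
        have hGprops : ∀ m ∈ G.erase 1, Squarefree m ∧ 1 < m ∧ m.primeFactors ⊆ S := by
          intro m hm
          obtain ⟨hm1, hmG⟩ := Finset.mem_erase.mp hm
          obtain ⟨n, hn, rfl⟩ := hGmem _ hmG
          obtain ⟨h1, h2, h3, h4⟩ := hfacts n hn
          exact ⟨h2, by omega, h3⟩
        have hGnz : ∀ m ∈ G.erase 1, c (q * m) ≠ 0 := by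
          intro m hm
          obtain ⟨hm1, hmG⟩ := Finset.mem_erase.mp hm
          obtain ⟨n, hn, rfl⟩ := hGmem _ hmG
          rw [(hfacts n hn).1]
          exact hc n (Finset.mem_of_mem_filter n hn)
        by_cases h1G : (1 : ℕ) ∈ G
        · have hGsplit : ((c (q * 1) : ℝ) * Real.sqrt ((1:ℕ):ℝ))
              + ∑ m ∈ G.erase 1, ((c (q * m) : ℝ) * Real.sqrt m) = B := by
            rw [← hGB]
            exact Finset.add_sum_erase G (fun m => (c (q * m) : ℝ) * Real.sqrt m) h1G
          have hG'ne : (G.erase 1).Nonempty := by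
            rcases Finset.eq_empty_or_nonempty (G.erase 1) with h | h
            · -- then G = {1} and B = c(q) ≠ 0, contradiction with B = 0
              exfalso
              have hGsub : G ⊆ {1} := by
                intro m hm
                by_contra hm1
                have hm1' : m ≠ 1 := fun he => hm1 (Finset.mem_singleton.mpr he)
                exact (Finset.notMem_empty m) (h ▸ Finset.mem_erase.mpr ⟨hm1', hm⟩)
              have hGeq : G = {1} := Finset.Subset.antisymm hGsub
                (Finset.singleton_subset_iff.mpr h1G)
              have : B = (c (q * 1) : ℝ) * Real.sqrt ((1:ℕ):ℝ) := by
                rw [← hGB, hGeq, Finset.sum_singleton]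
              obtain ⟨n, hn, hnq⟩ := hGmem 1 (hGeq ▸ Finset.mem_singleton_self 1)
              have hcn : c (q * 1) ≠ 0 := by
                have hfn := (hfacts n hn).1
                rw [show q * 1 = n by rw [← hnq]; exact hfn]
                exact hc n (Finset.mem_of_mem_filter n hn)
              rw [hB0, Nat.cast_one, Real.sqrt_one, mul_one] at this
              exact hcn (by exact_mod_cast this.symm)
            · exact h
          refine ihS (G.erase 1) (fun m => c (q * m)) hGprops hGnz hG'ne (- c (q * 1)) ?_
          have : ∑ m ∈ G.erase 1, ((c (q * m) : ℝ) * Real.sqrt m)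
              = B - (c (q * 1) : ℝ) * Real.sqrt ((1:ℕ):ℝ) := by
            rw [← hGsplit]; ring
          rw [this, hB0, Nat.cast_one, Real.sqrt_one]
          push_cast
          ring
        · -- 1 ∉ G : G.erase 1 = G
          have hGe : G.erase 1 = G := Finset.erase_eq_of_notMem h1G
          have hGne : G.Nonempty := hF₂ne.image _
          refine ihS (G.erase 1) (fun m => c (q * m)) hGprops hGnz (by rwa [hGe]) 0 ?_
          rw [hGe, hGB, hB0]
          norm_num
      · -- B ≠ 0 : √q ∈ sqA S, contradiction
        have hAmem : A ∈ sqA S := by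
          rw [hAdef]
          refine Subalgebra.sum_mem _ fun n hn => ?_
          obtain ⟨hnF, hndvd⟩ := Finset.mem_filter.mp hn
          obtain ⟨hsf, hlt, hsub⟩ := hF n hnF
          have hsubS : n.primeFactors ⊆ S := by
            intro p hp
            rcases Finset.mem_insert.mp (hsub hp) with h | h
            · exact absurd (h ▸ Nat.dvd_of_mem_primeFactors hp) hndvd
            · exact h
          exact mul_mem (ratCast_mem_sqA S (c n)) (sqrt_mem_sqA hsf hsubS)
        have hBmem : B ∈ sqA S := by
          rw [hBdef]
          refine Subalgebra.sum_mem _ fun n hn => ?_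
          obtain ⟨h1, h2, h3, h4⟩ := hfacts n hn
          exact mul_mem (ratCast_mem_sqA S (c n)) (sqrt_mem_sqA h2 h3)
        have hsqrtq : Real.sqrt q = ((r : ℝ) - A) * B⁻¹ := by
          rw [eq_mul_inv_iff_mul_eq₀ hB0]
          linarith [hsum2]
        have : Real.sqrt q ∈ sqA S := by
          rw [hsqrtq]
          exact mul_mem (sub_mem (ratCast_mem_sqA S r) hAmem) (sqA_inv_mem hBmem)
        refine sqrt_not_mem_sqA S hSP q hqP.squarefree ?_ this
        rw [Nat.Prime.primeFactors hqP]
        simpa using hq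

lemma coeff_aeval_negX (p : Polynomial (Polynomial ℤ)) (n : ℕ) :
    ((Polynomial.aeval (-X : Polynomial (Polynomial ℤ))) p).coeff n
      = (-1)^n * p.coeff n := by
  induction p using Polynomial.induction_on' with
  | add p q hp hq => simp [hp, hq, mul_add]
  | monomial i c =>
    have e0 : (Polynomial.aeval (-X : Polynomial (Polynomial ℤ))) (monomial i c)
        = C c * (-X)^i := by
      rw [Polynomial.aeval_monomial]; rfl
    have e1 : (C c * (-X : Polynomial (Polynomial ℤ))^i) = C ((-1:Polynomial ℤ)^i * c) * X^i := by
      rw [map_mul, map_pow, map_neg, map_one]; ring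
    rw [e0, e1, coeff_C_mul, coeff_X_pow, coeff_monomial]
    rcases eq_or_ne i n with rfl | h
    · simp
    · simp [h, Ne.symm h]

lemma exists_intpoly_conj (g : Polynomial ℤ) (a : ℕ) :
    ∃ h : Polynomial ℤ, ∀ x : ℝ, (Polynomial.aeval x) h =
      (Polynomial.aeval (x - Real.sqrt a) g) * (Polynomial.aeval (x + Real.sqrt a) g) := by
  set s : Polynomial (Polynomial ℤ) := C X + X with hs
  set d : Polynomial (Polynomial ℤ) := C X - X with hd
  set G : Polynomial (Polynomial ℤ) :=
    (Polynomial.aeval s) g * (Polynomial.aeval d) g with hG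
  have hφ : ∀ (p : Polynomial ℤ) (u : Polynomial (Polynomial ℤ)),
      (Polynomial.aeval (-X : Polynomial (Polynomial ℤ))) ((Polynomial.aeval u) p)
        = (Polynomial.aeval ((Polynomial.aeval (-X : Polynomial (Polynomial ℤ))) u)) p := by
    intro p u
    exact (Polynomial.aeval_algHom_apply
      ((Polynomial.aeval (-X : Polynomial (Polynomial ℤ)) :
        Polynomial (Polynomial ℤ) →ₐ[Polynomial ℤ] Polynomial (Polynomial ℤ)).restrictScalars ℤ)
      u p).symm
  have hφs : (Polynomial.aeval (-X : Polynomial (Polynomial ℤ))) s = d := by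
    rw [hs, hd, map_add, aeval_C, aeval_X]
    rw [Polynomial.algebraMap_eq]
    ring
  have hφd : (Polynomial.aeval (-X : Polynomial (Polynomial ℤ))) d = s := by
    rw [hs, hd, map_sub, aeval_C, aeval_X]
    rw [Polynomial.algebraMap_eq]
    ring
  have hφG : (Polynomial.aeval (-X : Polynomial (Polynomial ℤ))) G = G := by
    rw [hG, map_mul, hφ, hφ, hφs, hφd, mul_comm]
  have heven : ∀ m ∈ G.support, Even m := by
    intro m hm
    by_contra hodd
    have h1 : G.coeff m = (-1)^m * G.coeff m := by
      conv_lhs => rw [← hφG]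
      rw [coeff_aeval_negX]
    rw [(Nat.not_even_iff_odd.mp hodd).neg_one_pow, neg_one_mul] at h1
    have h2 : (2 : Polynomial ℤ) * G.coeff m = 0 := by linear_combination h1
    rcases mul_eq_zero.mp h2 with h | h
    · exact absurd h (by norm_num)
    · exact (Polynomial.mem_support_iff.mp hm) h
  refine ⟨G.sum fun n cf => cf * (C (a:ℤ))^(n/2), fun x => ?_⟩
  set ψ : Polynomial (Polynomial ℤ) →ₐ[ℤ] ℝ :=
    Polynomial.aevalTower (Polynomial.aeval x : Polynomial ℤ →ₐ[ℤ] ℝ) (Real.sqrt a) with hψdef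
  have hcomm : ∀ (p : Polynomial ℤ) (u : Polynomial (Polynomial ℤ)),
      ψ ((Polynomial.aeval u) p) = (Polynomial.aeval (ψ u)) p :=
    fun p u => (Polynomial.aeval_algHom_apply ψ u p).symm
  have hψC : ∀ r : Polynomial ℤ, ψ (C r) = (Polynomial.aeval x) r :=
    fun r => Polynomial.aevalTower_C _ _ _
  have hψX : ψ X = Real.sqrt a := Polynomial.aevalTower_X _ _
  have hψs : ψ s = x + Real.sqrt a := by
    rw [hs, map_add, hψC, hψX, aeval_X]
  have hψd : ψ d = x - Real.sqrt a := by
    rw [hd, map_sub, hψC, hψX, aeval_X]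
  have hRHS : (Polynomial.aeval (x - Real.sqrt a)) g * (Polynomial.aeval (x + Real.sqrt a)) g
      = ψ G := by
    rw [hG, map_mul, hcomm, hcomm, hψs, hψd, mul_comm]
  rw [hRHS]
  conv_rhs => rw [← Polynomial.sum_C_mul_X_pow_eq G]
  rw [Polynomial.sum_def, Polynomial.sum_def, map_sum, map_sum]
  refine Finset.sum_congr rfl fun n hn => ?_
  obtain ⟨m, hm⟩ := heven n hn
  rw [map_mul, map_pow, aeval_C, map_mul, hψC, map_pow, hψX]
  have h1 : Real.sqrt a ^ n = (a:ℝ) ^ m := by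
    rw [hm, pow_add, ← mul_pow, Real.mul_self_sqrt (by positivity)]
  have h2 : n / 2 = m := by omega
  rw [h1, h2]
  norm_num

noncomputable def conjSums : List ℕ → List ℝ
  | [] => [0]
  | a :: l => ((conjSums l).map (fun t => Real.sqrt a + t))
      ++ ((conjSums l).map (fun t => -Real.sqrt a + t))

lemma length_conjSums (l : List ℕ) : (conjSums l).length = 2 ^ l.length := by
  induction l with
  | nil => simp [conjSums]
  | cons a l ih => simp [conjSums, ih]; ring

lemma exists_intpoly (l : List ℕ) : ∃ h : Polynomial ℤ, ∀ x : ℝ,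
    (Polynomial.aeval x) h = ((conjSums l).map (fun t => x - t)).prod := by
  induction l with
  | nil => exact ⟨X, fun x => by simp [conjSums]⟩
  | cons a l ih =>
    obtain ⟨g, hg⟩ := ih
    obtain ⟨h, hh⟩ := exists_intpoly_conj g a
    refine ⟨h, fun x => ?_⟩
    rw [conjSums, List.map_append, List.prod_append, List.map_map, List.map_map]
    have e1 : ((fun t => x - t) ∘ (fun t => Real.sqrt a + t))
        = fun t => (x - Real.sqrt a) - t := by funext t; simp; ring
    have e2 : ((fun t => x - t) ∘ (fun t => -Real.sqrt a + t))
        = fun t => (x + Real.sqrt a) - t := by funext t; simp; ring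
    rw [e1, e2, ← hg (x - Real.sqrt a), ← hg (x + Real.sqrt a), hh]

lemma conjProd_int (l : List ℕ) (m : ℤ) :
    ∃ z : ℤ, ((conjSums l).map (fun t => (m:ℝ) - t)).prod = (z:ℝ) := by
  obtain ⟨h, hh⟩ := exists_intpoly l
  refine ⟨h.eval m, ?_⟩
  rw [← hh (m:ℝ)]
  rw [show ((m:ℤ):ℝ) = algebraMap ℤ ℝ m from (eq_intCast (algebraMap ℤ ℝ) m).symm]
  rw [aeval_algebraMap_apply_eq_algebraMap_eval]
  exact eq_intCast (algebraMap ℤ ℝ) _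

lemma sum_mem_conjSums (l : List ℕ) :
    (l.map (fun a : ℕ => Real.sqrt (a:ℝ))).sum ∈ conjSums l := by
  induction l with
  | nil => simp [conjSums]
  | cons a l ih =>
    rw [conjSums, List.map_cons, List.sum_cons]
    exact List.mem_append_left _ (List.mem_map.mpr ⟨_, ih, rfl⟩)

lemma abs_le_of_mem_conjSums {l : List ℕ} {t : ℝ} (ht : t ∈ conjSums l) :
    |t| ≤ (l.map (fun a : ℕ => Real.sqrt (a:ℝ))).sum := by
  induction l generalizing t with
  | nil => simp [conjSums] at ht; simp [ht]
  | cons a l ih =>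
    rw [conjSums] at ht
    rw [List.map_cons, List.sum_cons]
    rcases List.mem_append.mp ht with h | h <;>
      obtain ⟨t', ht', rfl⟩ := List.mem_map.mp h
    · calc |Real.sqrt a + t'| ≤ |Real.sqrt a| + |t'| := abs_add_le _ _
        _ ≤ Real.sqrt a + (l.map (fun a : ℕ => Real.sqrt (a:ℝ))).sum := by
            rw [abs_of_nonneg (Real.sqrt_nonneg _)]
            exact add_le_add le_rfl (ih ht')
    · calc |-Real.sqrt a + t'| ≤ |-Real.sqrt a| + |t'| := abs_add_le _ _
        _ ≤ Real.sqrt a + (l.map (fun a : ℕ => Real.sqrt (a:ℝ))).sum := by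
            rw [abs_neg, abs_of_nonneg (Real.sqrt_nonneg _)]
            exact add_le_add le_rfl (ih ht')

lemma mem_conjSums_signed {l : List ℕ} {t : ℝ} (ht : t ∈ conjSums l) :
    ∃ ε : Fin l.length → ℤ, (∀ i, ε i = 1 ∨ ε i = -1) ∧
      t = ∑ i, (ε i : ℝ) * Real.sqrt (l.get i) := by
  induction l generalizing t with
  | nil =>
    simp [conjSums] at ht
    exact ⟨fun i => 1, fun i => Or.inl rfl, by simp [ht]⟩
  | cons a l ih =>
    rw [conjSums] at ht
    rcases List.mem_append.mp ht with h | h <;>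
      obtain ⟨t', ht', rfl⟩ := List.mem_map.mp h <;>
      obtain ⟨ε, hε, rfl⟩ := ih ht'
    · refine ⟨Fin.cons 1 ε, fun i => ?_, ?_⟩
      · refine Fin.cases (Or.inl ?_) (fun j => hε j) i
        simp
      · simp only [List.length_cons]
        rw [Fin.sum_univ_succ]
        simp [Fin.cons_zero, Fin.cons_succ]
    · refine ⟨Fin.cons (-1) ε, fun i => ?_, ?_⟩
      · refine Fin.cases (Or.inr ?_) (fun j => hε j) i
        simp
      · simp only [List.length_cons]
        rw [Fin.sum_univ_succ]
        simp [Fin.cons_zero, Fin.cons_succ]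

lemma abs_list_prod_le (L : List ℝ) (Bd : ℝ) (hB : 0 ≤ Bd)
    (h : ∀ x ∈ L, |x| ≤ Bd) : |L.prod| ≤ Bd ^ L.length := by
  induction L with
  | nil => simp
  | cons x L ih =>
    rw [List.prod_cons, List.length_cons, abs_mul, pow_succ']
    exact mul_le_mul (h x (List.mem_cons_self))
      (ih fun y hy => h y (List.mem_cons_of_mem x hy)) (abs_nonneg _) hB

theorem general_lower_bound (k : ℕ) (hk : 1 ≤ k) :
    ∃ c : ℝ, 0 < c ∧ ∀ (n : ℕ) (a : Fin k → ℕ),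
      (∀ i, 1 ≤ a i ∧ a i ≤ n) →
      (∃ s : Fin k → ℕ, Function.Injective s ∧
        ∀ i, Squarefree (s i) ∧ 1 < s i ∧ ∃ m : ℕ, a i = s i * m ^ 2) →
      Irrational (∑ i, Real.sqrt (a i)) ∧
      c * (n : ℝ) ^ ((1 : ℝ) / 2 - 2 ^ (k - 1)) ≤ distNearestInt (∑ i, Real.sqrt (a i)) := by
  refine ⟨((2 * (k:ℝ) + 1))⁻¹ ^ (2^k - 1), by positivity, ?_⟩
  intro n a hb hex
  obtain ⟨s, hsinj, hsprops⟩ := hex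
  set l : List ℕ := List.ofFn a with hl
  have hlen : l.length = k := List.length_ofFn
  set T : ℝ := ∑ i, Real.sqrt (a i) with hTdef
  have hmapl : l.map (fun a : ℕ => Real.sqrt (a:ℝ)) = List.ofFn (fun i => Real.sqrt (a i)) := by
    rw [hl, List.map_ofFn]; rfl
  have hTmem : T ∈ conjSums l := by
    have h0 := sum_mem_conjSums l
    rwa [hmapl, List.sum_ofFn] at h0
  -- square root structure
  choose msq hmsq using fun i => (hsprops i).2.2
  have hm1 : ∀ i, 1 ≤ msq i := by
    intro i
    rcases Nat.eq_zero_or_pos (msq i) with h | h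
    · exfalso
      have h2 := (hb i).1
      rw [hmsq i, h] at h2
      simp at h2
    · exact h
  have hsqa : ∀ i, Real.sqrt (a i) = (msq i : ℝ) * Real.sqrt (s i) := by
    intro i
    rw [hmsq i]
    push_cast
    rw [Real.sqrt_mul (by positivity), Real.sqrt_sq (by positivity)]
    ring
  -- the prime set and squarefree set
  set S : Finset ℕ := Finset.univ.biUnion (fun i : Fin k => (s i).primeFactors) with hSdef
  have hSP : ∀ p ∈ S, p.Prime := by
    intro p hp
    obtain ⟨i, -, hi⟩ := Finset.mem_biUnion.mp hp
    exact Nat.prime_of_mem_primeFactors hi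
  set F : Finset ℕ := Finset.image s Finset.univ with hFdef
  have hFprops : ∀ v ∈ F, Squarefree v ∧ 1 < v ∧ v.primeFactors ⊆ S := by
    intro v hv
    obtain ⟨i, -, rfl⟩ := Finset.mem_image.mp hv
    exact ⟨(hsprops i).1, (hsprops i).2.1,
      fun p hp => Finset.mem_biUnion.mpr ⟨i, Finset.mem_univ i, hp⟩⟩
  have hFne : F.Nonempty := ⟨s ⟨0, hk⟩, Finset.mem_image.mpr ⟨⟨0, hk⟩, Finset.mem_univ _, rfl⟩⟩
  -- no element of conjSums is rational
  have hnoint : ∀ t ∈ conjSums l, ∀ r : ℚ, t ≠ (r:ℝ) := by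
    intro t ht r hr
    obtain ⟨ε, hε, htε⟩ := mem_conjSums_signed ht
    set ε' : Fin k → ℤ := fun i => ε (Fin.cast hlen.symm i) with hε'def
    have hε'v : ∀ i, ε' i = 1 ∨ ε' i = -1 := fun i => hε _
    have ht2 : t = ∑ i : Fin k, (ε' i : ℝ) * Real.sqrt (a i) := by
      rw [htε]
      refine Finset.sum_equiv (finCongr hlen) (by simp) ?_
      intro j _
      have hj1 : ε' (finCongr hlen j) = ε j := by
        simp [hε'def, finCongr]
      have hj2 : l.get j = a (finCongr hlen j) := by
        show (List.ofFn a).get j = a (finCongr hlen j)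
        rw [List.get_ofFn]
        rfl
      rw [hj1, hj2]
    have ht3 : t = ∑ i : Fin k, ((ε' i * msq i : ℤ) : ℝ) * Real.sqrt (s i) := by
      rw [ht2]
      refine Finset.sum_congr rfl fun i _ => ?_
      rw [hsqa i]
      push_cast
      ring
    set c : ℕ → ℚ := fun v =>
      ∑ i ∈ Finset.univ.filter (fun i => s i = v), ((ε' i * msq i : ℤ) : ℚ) with hcdef
    have hfil : ∀ j : Fin k, Finset.univ.filter (fun i => s i = s j) = {j} := by
      intro j
      ext i
      simp [Finset.mem_filter, hsinj.eq_iff]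
    have hcs : ∀ j, c (s j) = ((ε' j * msq j : ℤ) : ℚ) := by
      intro j
      rw [hcdef]
      simp only [hfil j, Finset.sum_singleton]
    have hcne : ∀ v ∈ F, c v ≠ 0 := by
      intro v hv
      obtain ⟨j, -, rfl⟩ := Finset.mem_image.mp hv
      rw [hcs j]
      have := hm1 j
      rcases hε'v j with h | h <;> (rw [h]; push_cast; intro hcon) <;> [skip; skip] <;>
        · norm_num at hcon
          omega
    refine sqrt_sum_ne_rat S hSP F c hFprops hcne hFne r ?_
    rw [Finset.sum_image (fun x _ y _ h => hsinj h)]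
    rw [← hr, ht3]
    refine Finset.sum_congr rfl fun j _ => ?_
    rw [hcs j]
    push_cast
    ring
  constructor
  · rintro ⟨q, hq⟩
    exact hnoint T hTmem q hq.symm
  -- the quantitative bound
  have hn1 : 1 ≤ n := le_trans (hb ⟨0, hk⟩).1 (hb ⟨0, hk⟩).2
  have hsqn1 : (1:ℝ) ≤ Real.sqrt n := by
    rw [show (1:ℝ) = Real.sqrt 1 by simp]
    exact Real.sqrt_le_sqrt (by exact_mod_cast hn1)
  have habs : ∀ t ∈ conjSums l, |t| ≤ (k:ℝ) * Real.sqrt n := by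
    intro t ht
    refine (abs_le_of_mem_conjSums ht).trans ?_
    rw [hmapl, List.sum_ofFn]
    calc ∑ i, Real.sqrt (a i) ≤ ∑ _i : Fin k, Real.sqrt n :=
          Finset.sum_le_sum fun i _ => Real.sqrt_le_sqrt (by exact_mod_cast (hb i).2)
      _ = (k:ℝ) * Real.sqrt n := by
          rw [Finset.sum_const, Finset.card_univ, Fintype.card_fin, nsmul_eq_mul]
  set M : ℤ := round T with hMdef
  have hMT : |(M:ℝ) - T| ≤ 1/2 := by
    rw [abs_sub_comm]
    exact abs_sub_round T
  set Bd : ℝ := (2 * (k:ℝ) + 1) * Real.sqrt n with hBddef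
  have hfb : ∀ t ∈ conjSums l, |(M:ℝ) - t| ≤ Bd := by
    intro t ht
    have h3 : |(M:ℝ) - t| ≤ |(M:ℝ) - T| + |T - t| := abs_sub_le _ _ _
    have h4 : |T - t| ≤ |T| + |t| := abs_sub _ _
    have h5 := habs t ht
    have h6 := habs T hTmem
    rw [hBddef]
    nlinarith [hsqn1]
  obtain ⟨z, hz⟩ := conjProd_int l M
  have hz0 : z ≠ 0 := by
    rintro rfl
    rw [Int.cast_zero] at hz
    obtain ⟨t, ht, hzero⟩ := List.mem_map.mp (List.prod_eq_zero_iff.mp hz)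
    refine hnoint t ht (M:ℚ) ?_
    push_cast
    linarith
  obtain ⟨l₁, l₂, hsplit⟩ := List.append_of_mem hTmem
  have hlenc : l₁.length + l₂.length + 1 = 2^k := by
    have h7 := length_conjSums l
    rw [hsplit, hlen] at h7
    simp [List.length_append] at h7
    omega
  have hprodeq : ((conjSums l).map (fun t => (M:ℝ) - t)).prod
      = ((M:ℝ) - T) * (((l₁ ++ l₂).map (fun t => (M:ℝ) - t)).prod) := by
    rw [hsplit]
    simp only [List.map_append, List.prod_append, List.map_cons, List.prod_cons]
    ring
  have hrest : |(((l₁ ++ l₂).map (fun t => (M:ℝ) - t)).prod)| ≤ Bd ^ (2^k - 1) := by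
    have hlen2 : ((l₁ ++ l₂).map (fun t => (M:ℝ) - t)).length = 2^k - 1 := by
      simp only [List.length_map, List.length_append]
      omega
    rw [← hlen2]
    refine abs_list_prod_le _ _ (by positivity) ?_
    intro x hx
    obtain ⟨t, ht, rfl⟩ := List.mem_map.mp hx
    refine hfb t ?_
    rw [hsplit]
    rcases List.mem_append.mp ht with h | h
    · exact List.mem_append_left _ h
    · exact List.mem_append_right _ (List.mem_cons_of_mem _ h)
  have hone : (1:ℝ) ≤ |(M:ℝ) - T| * |(((l₁ ++ l₂).map (fun t => (M:ℝ) - t)).prod)| := by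
    rw [← abs_mul, ← hprodeq, hz]
    exact_mod_cast Int.one_le_abs hz0
  have hd : distNearestInt T = |(M:ℝ) - T| := by
    rw [distNearestInt, abs_sub_comm, hMdef]
  have hBpos : (0:ℝ) < Bd ^ (2^k - 1) := by positivity
  have hBd1 : (Bd ^ (2^k - 1))⁻¹ ≤ distNearestInt T := by
    rw [hd, inv_eq_one_div, div_le_iff₀ hBpos]
    calc (1:ℝ) ≤ |(M:ℝ) - T| * |(((l₁ ++ l₂).map (fun t => (M:ℝ) - t)).prod)| := hone
      _ ≤ |(M:ℝ) - T| * Bd ^ (2^k - 1) :=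
          mul_le_mul_of_nonneg_left hrest (abs_nonneg _)
  refine le_trans (le_of_eq ?_) hBd1
  -- arithmetic of exponents
  have hN : ((2^k - 1 : ℕ) : ℝ) = 2^k - 1 := by
    rw [Nat.cast_sub (Nat.one_le_two_pow)]
    push_cast
    ring
  have h2k : (2:ℝ)^k = 2 * 2^(k-1) := by
    rw [← pow_succ']
    congr 1
    omega
  have he : (1:ℝ)/2 - 2^(k-1) = -(((2^k - 1 : ℕ):ℝ)/2) := by
    rw [hN, h2k]
    ring
  have hsq : Real.sqrt n ^ (2^k - 1 : ℕ) = (n:ℝ) ^ (((2^k - 1 : ℕ):ℝ)/2) := by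
    rw [Real.sqrt_eq_rpow, ← Real.rpow_natCast ((n:ℝ) ^ ((1:ℝ)/2)) (2^k - 1),
      ← Real.rpow_mul (by positivity)]
    congr 1
    ring
  rw [he, Real.rpow_neg (by positivity), ← hsq]
  rw [hBddef, mul_pow, inv_pow, mul_inv]
end
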